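/- Let (X,d) be a dissimilarity space that is conical with apex p (d(p,x) = δ > 0 for all x ∈ X \ {p}), let X' = X \ {p}, let <' be a compatible order of (X',d) with minimum x_* and maximum x^*. Then the total order on X obtained by placing p after x^* (or, equivalently, the one obtained by placing p before x_*), keeping <' on X', is a compatible order of (X,d) if and only if d(x_*, x^*) ≤ δ. Moreover, if d(x_*, x^*) ≤ δ, then for a pair (y,z) of consecutive elements of <' with y <' z, the order obtained by inserting p between y and z is compatible if and only if d(y,z) = δ. -/

import Mathlib

def IsCompatible {X : Type*} (d : X → X → ℝ) (lt : X → X → Prop) : Prop :=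
  ∀ x y z : X, lt x y → lt y z → max (d x y) (d y z) ≤ d x z

/-- Inserting `p` in the hole just after `y` (before the successor of `y`). -/
def insertOrder {X : Type*} (p : X)
    (lt' : {x : X // x ≠ p} → {x : X // x ≠ p} → Prop)
    (y : {x : X // x ≠ p}) : X → X → Prop :=
  fun u v =>
    (∃ hv : v ≠ p, u = p ∧ lt' y ⟨v, hv⟩) ∨
    (∃ hu : u ≠ p, v = p ∧ ¬ lt' y ⟨u, hu⟩) ∨
    (∃ hu : u ≠ p, ∃ hv : v ≠ p, lt' ⟨u, hu⟩ ⟨v, hv⟩)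

/-- The total order on `X` obtained by placing `p` after all elements of
`X' = X \ {p}`, keeping `lt'` on `X'`. -/
def endOrder {X : Type*} (p : X)
    (lt' : {x : X // x ≠ p} → {x : X // x ≠ p} → Prop) : X → X → Prop :=
  fun u v =>
    (∃ _ : u ≠ p, v = p) ∨
    (∃ hu : u ≠ p, ∃ hv : v ≠ p, lt' ⟨u, hu⟩ ⟨v, hv⟩)

/-- in a conical space with apex `p`, for a compatible order `<'` of
`X' = X \ {p}` with minimum `x_*` and maximum `x^*`, placing `p` after `x^*` gives a
compatible order of `(X,d)` iff `d(x_*,x^*) ≤ δ`; moreover, if `d(x_*,x^*) ≤ δ`, then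
inserting `p` between consecutive `y <' z` gives a compatible order iff `d(y,z) = δ`. -/
theorem extreme_hole_admissible {X : Type*} [Fintype X] (d : X → X → ℝ)
    (hsymm : ∀ x y : X, d x y = d y x)
    (hnonneg : ∀ x y : X, 0 ≤ d x y)
    (hself : ∀ x : X, d x x = 0)
    (p : X) (δ : ℝ) (hδpos : 0 < δ)
    (hconical : ∀ x : X, x ≠ p → d p x = δ)
    (lt' : {x : X // x ≠ p} → {x : X // x ≠ p} → Prop)
    (hsto : IsStrictTotalOrder {x : X // x ≠ p} lt')
    (hcomp : ∀ u v w : {x : X // x ≠ p}, lt' u v → lt' v w →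
      max (d u.1 v.1) (d v.1 w.1) ≤ d u.1 w.1)
    (xmin xmax : {x : X // x ≠ p})
    (hmin : ∀ w : {x : X // x ≠ p}, ¬ lt' w xmin)
    (hmax : ∀ w : {x : X // x ≠ p}, ¬ lt' xmax w) :
    (IsCompatible d (endOrder p lt') ↔ d xmin.1 xmax.1 ≤ δ) ∧
    (d xmin.1 xmax.1 ≤ δ →
      ∀ y z : {x : X // x ≠ p}, lt' y z →
        (∀ w : {x : X // x ≠ p}, ¬ (lt' y w ∧ lt' w z)) →
        (IsCompatible d (insertOrder p lt' y) ↔ d y.1 z.1 = δ)) := by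

  have hirr : ∀ u : {x : X // x ≠ p}, ¬ lt' u u := fun u => hsto.irrefl u
  have htri : ∀ u v : {x : X // x ≠ p}, lt' u v ∨ u = v ∨ lt' v u := by
    intro u v
    by_cases h1 : lt' u v
    · exact Or.inl h1
    by_cases h2 : lt' v u
    · exact Or.inr (Or.inr h2)
    exact Or.inr (Or.inl (hsto.trichotomous u v h1 h2))
  have htrans : ∀ {a b c : {x : X // x ≠ p}}, lt' a b → lt' b c → lt' a c :=
    fun h1 h2 => hsto.trans _ _ _ h1 h2
  have hle_min : ∀ u : {x : X // x ≠ p}, xmin = u ∨ lt' xmin u := by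
    intro u
    rcases htri xmin u with h | h | h
    · exact Or.inr h
    · exact Or.inl h
    · exact absurd h (hmin u)
  have hle_max : ∀ u : {x : X // x ≠ p}, u = xmax ∨ lt' u xmax := by
    intro u
    rcases htri u xmax with h | h | h
    · exact Or.inr h
    · exact Or.inl h
    · exact absurd h (hmax u)
  have hmono : ∀ a u v b : {x : X // x ≠ p}, (a = u ∨ lt' a u) → lt' u v →
      (v = b ∨ lt' v b) → d u.1 v.1 ≤ d a.1 b.1 := by
    intro a u v b hau huv hvb
    have hub : lt' u b := by
      rcases hvb with rfl | h
      · exact huv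
      · exact htrans huv h
    have h1 : d u.1 v.1 ≤ d u.1 b.1 := by
      rcases hvb with rfl | h
      · exact le_refl _
      · exact le_trans (le_max_left _ _) (hcomp u v b huv h)
    rcases hau with rfl | h
    · exact h1
    · exact le_trans h1 (le_trans (le_max_right _ _) (hcomp a u b h hub))
  have hbound : ∀ u v : {x : X // x ≠ p}, lt' u v → d u.1 v.1 ≤ d xmin.1 xmax.1 :=
    fun u v h => hmono xmin u v xmax (hle_min u) h (hle_max v)
  constructor
  · constructor
    · intro hc
      rcases htri xmin xmax with h | h | h
      · have h2 := hc xmin.1 xmax.1 p (Or.inr ⟨xmin.2, xmax.2, h⟩) (Or.inl ⟨xmax.2, rfl⟩)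
        rw [hsymm xmin.1 p, hconical xmin.1 xmin.2] at h2
        exact le_trans (le_max_left _ _) h2
      · rw [h, hself]; exact le_of_lt hδpos
      · exact absurd h (hmax xmin)
    · intro hle x y z hxy hyz
      rcases hxy with ⟨hx, hyp⟩ | ⟨hx, hy, hxy'⟩
      · rcases hyz with ⟨hy, _⟩ | ⟨hy, _, _⟩ <;> exact absurd hyp hy
      · rcases hyz with ⟨hy', hzp⟩ | ⟨hy', hz, hyz'⟩
        · rw [hzp, hsymm x p, hconical x hx, hsymm y p, hconical y hy]
          exact max_le (le_trans (hbound ⟨x, hx⟩ ⟨y, hy⟩ hxy') hle) (le_refl _)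
        · exact hcomp ⟨x, hx⟩ ⟨y, hy⟩ ⟨z, hz⟩ hxy' hyz'
  · intro hle y z hyz hconsec
    have hboundδ : ∀ u v : {x : X // x ≠ p}, lt' u v → d u.1 v.1 ≤ δ :=
      fun u v h => le_trans (hbound u v h) hle
    constructor
    · intro hc
      have h1 : insertOrder p lt' y y.1 p := Or.inr (Or.inl ⟨y.2, rfl, hirr y⟩)
      have h2 : insertOrder p lt' y p z.1 := Or.inl ⟨z.2, rfl, hyz⟩
      have h3 := hc y.1 p z.1 h1 h2
      rw [hconical z.1 z.2, hsymm y.1 p, hconical y.1 y.2, max_self] at h3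
      exact le_antisymm (hboundδ y z hyz) h3
    · intro heq x v w h1 h2
      rcases h1 with ⟨hv, hxp, hyv⟩ | ⟨hx, hvp, hnyx⟩ | ⟨hx, hv, hxv⟩
      · -- x = p
        rcases h2 with ⟨hw, hvp, _⟩ | ⟨hv', hwp, hnyv⟩ | ⟨hv', hw, hvw⟩
        · exact absurd hvp hv
        · exact absurd hyv hnyv
        · rw [hxp, hconical v hv, hconical w hw]
          exact max_le (le_refl _) (hboundδ ⟨v, hv'⟩ ⟨w, hw⟩ hvw)
      · -- v = p
        rcases h2 with ⟨hw, _, hyw⟩ | ⟨hv', hwp, _⟩ | ⟨hv', _, _⟩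
        · -- w ≠ p, lt' y w : need δ ≤ d x w
          rw [hvp]
          have hxy : (⟨x, hx⟩ : {x : X // x ≠ p}) = y ∨ lt' (⟨x, hx⟩ : {x : X // x ≠ p}) y := by
            rcases htri ⟨x, hx⟩ y with h | h | h
            · exact Or.inr h
            · exact Or.inl h
            · exact absurd h hnyx
          have hzw : z = (⟨w, hw⟩ : {x : X // x ≠ p}) ∨ lt' z (⟨w, hw⟩ : {x : X // x ≠ p}) := by
            rcases htri z ⟨w, hw⟩ with h | h | h
            · exact Or.inr h
            · exact Or.inl h
            · exact absurd ⟨hyw, h⟩ (hconsec ⟨w, hw⟩)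
          have hge : δ ≤ d x w := heq ▸ hmono ⟨x, hx⟩ y z ⟨w, hw⟩ hxy hyz hzw
          rw [hsymm x p, hconical x hx, hconical w hw, max_self]
          exact hge
        · exact absurd hvp hv'
        · exact absurd hvp hv'
      · -- x, v ≠ p, lt' x v
        rcases h2 with ⟨hw, hvp2, _⟩ | ⟨hv', hwp, hnyv⟩ | ⟨hv', hw, hvw⟩
        · exact absurd hvp2 hv
        · rw [hwp, hsymm v p, hconical v hv, hsymm x p, hconical x hx]
          exact max_le (hboundδ ⟨x, hx⟩ ⟨v, hv⟩ hxv) (le_refl _)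
        · exact hcomp ⟨x, hx⟩ ⟨v, hv⟩ ⟨w, hw⟩ hxv hvw
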